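/- Let A ∈ ℝ^{n×m} be a matrix of rank r and let ω ∈ ℝ^n. Then there exist matrices Q ∈ ℝ^{n×r} and C ∈ ℝ^{r×m} such that A = Q C, Qᵀ Q = I_r, and Qᵀ·diag(ω)·Q is a diagonal matrix. Moreover, if A has at most R nonzero entries, then r ≤ R and each of Q and C has at most R·r nonzero entries. (Existence and sparsity of the ω-orthogonal QC decomposition.) -/

import Mathlib

open Matrix

open Module Submodule RealInnerProductSpace in
private lemma ncard_prod_aux {α β : Type*} (s : Set α) (t : Set β) :
    (s ×ˢ t).ncard = s.ncard * t.ncard := by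
  rw [← Nat.card_coe_set_eq, ← Nat.card_coe_set_eq, ← Nat.card_coe_set_eq,
    Nat.card_congr (Equiv.Set.prod s t), Nat.card_prod]

open Module Submodule RealInnerProductSpace in
/-- Existence and sparsity of the `ω`-orthogonal QC decomposition: a rank-`r` matrix
`A` factors as `A = Q C` with `QᵀQ = I` and `Qᵀ diag(ω) Q` diagonal; if moreover `A`
has at most `R` nonzero entries, then `r ≤ R` and both `Q` and `C` have at most
`R⋅r` nonzero entries. -/
theorem omega_orthogonal_qc_decomposition
    (n m : ℕ) (A : Matrix (Fin n) (Fin m) ℝ) (ω : Fin n → ℝ)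
    (r : ℕ) (hrank : A.rank = r) (R : ℕ) :
    ∃ (Q : Matrix (Fin n) (Fin r) ℝ) (C : Matrix (Fin r) (Fin m) ℝ),
      A = Q * C ∧
      Qᵀ * Q = 1 ∧
      (Qᵀ * Matrix.diagonal ω * Q).IsDiag ∧
      ({p : Fin n × Fin m | A p.1 p.2 ≠ 0}.ncard ≤ R →
        r ≤ R ∧
        {p : Fin n × Fin r | Q p.1 p.2 ≠ 0}.ncard ≤ R * r ∧
        {p : Fin r × Fin m | C p.1 p.2 ≠ 0}.ncard ≤ R * r) := by
  classical
  set E := EuclideanSpace ℝ (Fin n) with hE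
  let L : EuclideanSpace ℝ (Fin m) →ₗ[ℝ] E := Matrix.toEuclideanLin A
  set W : Submodule ℝ E := LinearMap.range L with hWdef
  have hL : ∀ (v : EuclideanSpace ℝ (Fin m)) (i : Fin n), L v i = ∑ j, A i j * v j :=
    fun v i => rfl
  have hsum : ∀ {ι : Type} [Fintype ι] (f : ι → E) (i : Fin n),
      (∑ k, f k) i = ∑ k, f k i := by
    intro ι _ f i
    rw [WithLp.ofLp_sum]
    exact Finset.sum_apply i Finset.univ (fun k => (f k).ofLp)
  have hW : finrank ℝ W = r := by
    rw [← hrank]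
    show finrank ℝ (LinearMap.range (Matrix.toEuclideanLin A)) = A.rank
    rw [Matrix.toEuclideanLin_eq_toLin]
    exact (A.rank_eq_finrank_range_toLin _ _).symm
  let D : E →ₗ[ℝ] E := Matrix.toEuclideanLin (Matrix.diagonal ω)
  have hD : ∀ (v : E) (i : Fin n), D v i = ω i * v i := by
    intro v i
    show (Matrix.diagonal ω *ᵥ _) i = _
    simp [mulVec_diagonal]
  let T : W →ₗ[ℝ] W :=
    (orthogonalProjection W).toLinearMap ∘ₗ D ∘ₗ W.subtype
  have hTapp : ∀ x : W, T x = orthogonalProjection W (D (x : E)) := fun x => rfl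
  have hDsym : ∀ u v : E, ⟪D u, v⟫ = ⟪u, D v⟫ := by
    intro u v
    rw [PiLp.inner_apply, PiLp.inner_apply]
    refine Finset.sum_congr rfl fun i _ => ?_
    rw [hD, hD, RCLike.inner_apply, RCLike.inner_apply, conj_trivial, conj_trivial]
    ring
  have hT : T.IsSymmetric := by
    intro x y
    rw [hTapp, hTapp, inner_orthogonalProjection_eq_of_mem_right,
      inner_orthogonalProjection_eq_of_mem_left]
    exact hDsym _ _
  -- the orthonormal eigenbasis
  let b : OrthonormalBasis (Fin r) ℝ W := hT.eigenvectorBasis hW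
  have hb := orthonormal_iff_ite.mp b.orthonormal
  let Q : Matrix (Fin n) (Fin r) ℝ := Matrix.of fun i k => (b k : E) i
  let C : Matrix (Fin r) (Fin m) ℝ := Qᵀ * A
  -- basic inner product computations
  have hinner : ∀ k l : Fin r, ⟪b k, b l⟫ = ∑ i, Q i k * Q i l := by
    intro k l
    rw [Submodule.coe_inner, PiLp.inner_apply]
    refine Finset.sum_congr rfl fun i _ => ?_
    show _ = (b k : E) i * (b l : E) i
    rw [RCLike.inner_apply, conj_trivial]
    ring
  have hQQ : Qᵀ * Q = 1 := by
    ext k l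
    have h2 : (Qᵀ * Q) k l = ∑ i, Q i k * Q i l := by
      rw [Matrix.mul_apply]
      exact Finset.sum_congr rfl fun i _ => rfl
    rw [h2, ← hinner k l, hb k l]
    by_cases h : k = l <;> simp [h, Matrix.one_apply]
  -- diagonality
  have hdiag : (Qᵀ * Matrix.diagonal ω * Q).IsDiag := by
    intro k l hkl
    have key : (Qᵀ * Matrix.diagonal ω * Q) k l = ⟪(b k : E), D (b l : E)⟫ := by
      rw [PiLp.inner_apply]
      rw [Matrix.mul_assoc, Matrix.mul_apply]
      refine Finset.sum_congr rfl fun i _ => ?_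
      rw [Matrix.mul_apply, RCLike.inner_apply, conj_trivial, hD]
      simp only [transpose_apply]
      rw [Finset.sum_eq_single i (by intro j _ hj; simp [Matrix.diagonal_apply_ne' _ hj])
        (by simp)]
      simp only [Matrix.diagonal_apply_eq]
      show (b k : E) i * (ω i * (b l : E) i) = ω i * (b l : E) i * (b k : E) i
      ring
    rw [key]
    have h3 : ⟪(b k : E), D (b l : E)⟫ = ⟪b k, T (b l)⟫ := by
      rw [hTapp, inner_orthogonalProjection_eq_of_mem_left]
    rw [h3, hT.apply_eigenvectorBasis hW l, inner_smul_right, hb k l, if_neg hkl, mul_zero]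
  -- membership of columns
  have hcolmem : ∀ j : Fin m, (WithLp.toLp 2 (fun i => A i j) : E) ∈ W := by
    intro j
    refine ⟨(WithLp.toLp 2 (fun j' => if j' = j then (1:ℝ) else 0) : EuclideanSpace ℝ (Fin m)), ?_⟩
    ext i
    rw [hL]
    show ∑ j', A i j' * (if j' = j then (1:ℝ) else 0) = A i j
    rw [Finset.sum_eq_single j (by intro j' _ hj; simp [hj]) (by simp)]
    simp
  -- A = Q C
  have hQC : A = Q * C := by
    ext i j
    set w : W := ⟨(WithLp.toLp 2 (fun i' => A i' j) : E), hcolmem j⟩ with hw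
    have hrepr := b.sum_repr w
    have hrk : ∀ k, b.repr w k = ∑ l, Q l k * A l j := by
      intro k
      rw [b.repr_apply_apply, Submodule.coe_inner, PiLp.inner_apply]
      refine Finset.sum_congr rfl fun l _ => ?_
      show _ = (b k : E) l * A l j
      rw [RCLike.inner_apply, conj_trivial]
      exact mul_comm _ _
    calc A i j = (w : E) i := rfl
      _ = ((∑ k, b.repr w k • b k : W) : E) i := by rw [hrepr]
      _ = ∑ k, b.repr w k * (b k : E) i := by
          rw [AddSubmonoidClass.coe_finset_sum, hsum]
          exact Finset.sum_congr rfl fun k _ => rfl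
      _ = (Q * C) i j := by
          rw [Matrix.mul_apply]
          refine Finset.sum_congr rfl fun k _ => ?_
          rw [hrk k]
          show (∑ l, Q l k * A l j) * Q i k = Q i k * (Qᵀ * A) k j
          rw [Matrix.mul_apply]
          have : ∑ l, Qᵀ k l * A l j = ∑ l, Q l k * A l j :=
            Finset.sum_congr rfl fun l _ => rfl
          rw [this]
          ring
  refine ⟨Q, C, hQC, hQQ, hdiag, ?_⟩
  -- sparsity
  intro hS
  set S : Set (Fin n × Fin m) := {p | A p.1 p.2 ≠ 0} with hSdef
  have hSfin : S.Finite := Set.toFinite _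
  set rows : Set (Fin n) := {i | ∃ j, A i j ≠ 0} with hrows
  set cols : Set (Fin m) := {j | ∃ i, A i j ≠ 0} with hcols
  have hrowsR : rows.ncard ≤ R := by
    have h : rows = Prod.fst '' S := by
      ext i; simp [hrows, hSdef]
    rw [h]
    exact le_trans (Set.ncard_image_le hSfin) hS
  have hcolsR : cols.ncard ≤ R := by
    have h : cols = Prod.snd '' S := by
      ext j; simp [hcols, hSdef]
    rw [h]
    exact le_trans (Set.ncard_image_le hSfin) hS
  -- r ≤ R : W is contained in the span of the nonzero columns
  have hWle : W ≤ span ℝ ((fun j => (WithLp.toLp 2 (fun i => A i j) : E)) '' cols) := by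
    rintro v ⟨x, rfl⟩
    have hLx : L x = ∑ j, x j • (WithLp.toLp 2 (fun i => A i j) : E) := by
      ext i
      rw [hL, hsum]
      refine Finset.sum_congr rfl fun j _ => ?_
      show A i j * x j = x j * A i j
      ring
    rw [hLx]
    refine Submodule.sum_mem _ fun j _ => ?_
    by_cases hj : j ∈ cols
    · exact Submodule.smul_mem _ _ (Submodule.subset_span ⟨j, hj, rfl⟩)
    · have hz : (WithLp.toLp 2 (fun i => A i j) : E) = 0 := by
        ext i
        by_contra h
        exact hj ⟨i, h⟩
      rw [hz, smul_zero]
      exact Submodule.zero_mem _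
  have hrR : r ≤ R := by
    have h1 : r ≤ finrank ℝ (span ℝ ((fun j => (WithLp.toLp 2 (fun i => A i j) : E)) '' cols)) := by
      rw [← hW]
      exact Submodule.finrank_mono hWle
    have hfin : ((fun j => (WithLp.toLp 2 (fun i => A i j) : E)) '' cols).Finite := Set.toFinite _
    have h2 : finrank ℝ (span ℝ ((fun j => (WithLp.toLp 2 (fun i => A i j) : E)) '' cols)) ≤
        ((fun j => (WithLp.toLp 2 (fun i => A i j) : E)) '' cols).ncard := by
      have := finrank_span_finset_le_card (R := ℝ) (M := E) hfin.toFinset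
      rw [Set.Finite.coe_toFinset] at this
      rw [Set.ncard_eq_toFinset_card' ((fun j => (WithLp.toLp 2 (fun i => A i j) : E)) '' cols)]
      simpa [Set.finrank] using this
    refine le_trans h1 (le_trans h2 (le_trans ?_ hcolsR))
    exact Set.ncard_image_le (Set.toFinite _)
  -- Q sparsity
  have hWzero : ∀ v ∈ W, ∀ i, i ∉ rows → v i = 0 := by
    rintro v ⟨x, rfl⟩ i hi
    rw [hL]
    refine Finset.sum_eq_zero fun j _ => ?_
    have hA : A i j = 0 := by
      by_contra h
      exact hi ⟨j, h⟩
    rw [hA, zero_mul]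
  have hQsub : {p : Fin n × Fin r | Q p.1 p.2 ≠ 0} ⊆ rows ×ˢ (Set.univ : Set (Fin r)) := by
    rintro ⟨i, k⟩ hp
    refine ⟨?_, trivial⟩
    by_contra hi
    exact hp (hWzero (b k) (b k).2 i hi)
  have hQcard : {p : Fin n × Fin r | Q p.1 p.2 ≠ 0}.ncard ≤ R * r := by
    refine le_trans (Set.ncard_le_ncard hQsub (Set.toFinite _)) ?_
    rw [ncard_prod_aux, Set.ncard_univ, Nat.card_eq_fintype_card, Fintype.card_fin]
    exact Nat.mul_le_mul_right r hrowsR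
  -- C sparsity
  have hCsub : {p : Fin r × Fin m | C p.1 p.2 ≠ 0} ⊆ (Set.univ : Set (Fin r)) ×ˢ cols := by
    rintro ⟨k, j⟩ hp
    refine ⟨trivial, ?_⟩
    by_contra hj
    refine hp ?_
    show (Qᵀ * A) k j = 0
    rw [Matrix.mul_apply]
    refine Finset.sum_eq_zero fun l _ => ?_
    have hA : A l j = 0 := by
      by_contra h
      exact hj ⟨l, h⟩
    rw [hA, mul_zero]
  have hCcard : {p : Fin r × Fin m | C p.1 p.2 ≠ 0}.ncard ≤ R * r := by
    refine le_trans (Set.ncard_le_ncard hCsub (Set.toFinite _)) ?_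
    rw [ncard_prod_aux, Set.ncard_univ, Nat.card_eq_fintype_card, Fintype.card_fin, mul_comm]
    exact Nat.mul_le_mul_right r hcolsR
  exact ⟨hrR, hQcard, hCcard⟩
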